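/- Suppose that the product of transfer matrices at zero satisfies ∏_{i=0}^{N−1} B̂^i(0) = γ·Id for some real number γ. Let (ã_k : k ≥ 0) be an arbitrary sequence of positive real numbers and define a_{Nk+i} = α_i·ã_k and b_{Nk+i} = β_i·ã_k for 0 ≤ i ≤ N−1 and k ≥ 0. Let (p_n : n ≥ 0) be the orthonormal polynomials associated with (a_n) and (b_n), i.e. p_0 = 1, p_1(x) = (x − b_0)/a_0, and a_{n−1}·p_{n−1}(x) + b_n·p_n(x) + a_n·p_{n+1}(x) = x·p_n(x) for all n ≥ 1. Then γ² = 1 and for all k ≥ 0 and all 0 ≤ i ≤ N−1 one has p_{Nk+i}(0) = γ^k · w_i(0). -/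

import Mathlib

open scoped Matrix

/-- The product `C (n₀ + len - 1) * ⋯ * C n₀` of matrices, with larger indices on the left;
equal to the identity when `len = 0`. -/
def prodDesc (C : ℤ → Matrix (Fin 2) (Fin 2) ℝ) (n₀ : ℤ) : ℕ → Matrix (Fin 2) (Fin 2) ℝ
  | 0 => 1
  | len + 1 => C (n₀ + len) * prodDesc C n₀ len

/-- The transfer matrix `B̂^j(x)` associated with the sequences `α`, `β`. -/
noncomputable def transferMatrix (α β : ℤ → ℝ) (j : ℤ) (x : ℝ) : Matrix (Fin 2) (Fin 2) ℝ :=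
  !![0, 1; -(α (j - 1) / α j), (x - β j) / α j]

lemma prodDesc_succ_left (C : ℤ → Matrix (Fin 2) (Fin 2) ℝ) (n₀ : ℤ) (len : ℕ) :
    prodDesc C n₀ (len+1) = prodDesc C (n₀+1) len * C n₀ := by
  induction len with
  | zero => simp [prodDesc]
  | succ m ih =>
    rw [show prodDesc C n₀ (m+1+1) = C (n₀ + (m+1:ℕ)) * prodDesc C n₀ (m+1) from rfl, ih,
        show prodDesc C (n₀+1) (m+1) = C (n₀+1+(m:ℕ)) * prodDesc C (n₀+1) m from rfl,
        show n₀ + ((m+1:ℕ):ℤ) = n₀+1+(m:ℕ) by push_cast; ring, Matrix.mul_assoc]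

lemma tmStep (α β : ℤ → ℝ) (x y : ℝ) (j : ℤ) :
    transferMatrix α β j 0 *ᵥ ![x, y] = ![y, -(α (j-1)/α j) * x + (0 - β j)/α j * y] := by
  funext i; fin_cases i <;>
    simp [transferMatrix, Matrix.mulVec, dotProduct, Fin.sum_univ_two]

theorem stmt0 (N : ℕ) (hN : 2 ≤ N)
    (α β : ℤ → ℝ) (hαpos : ∀ j, 0 < α j)
    (hαper : ∀ j, α (j + N) = α j) (hβper : ∀ j, β (j + N) = β j)
    (γ : ℝ)
    (hF : prodDesc (fun j => transferMatrix α β j 0) 0 N = γ • (1 : Matrix (Fin 2) (Fin 2) ℝ))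
    (atil : ℕ → ℝ) (hatil : ∀ k, 0 < atil k)
    (a b : ℕ → ℝ)
    (ha : ∀ k : ℕ, ∀ i < N, a (N * k + i) = α i * atil k)
    (hb : ∀ k : ℕ, ∀ i < N, b (N * k + i) = β i * atil k)
    (p : ℕ → ℝ → ℝ)
    (hp0 : ∀ x, p 0 x = 1) (hp1 : ∀ x, p 1 x = (x - b 0) / a 0)
    (hprec : ∀ n, 1 ≤ n → ∀ x,
      a (n - 1) * p (n - 1) x + b n * p n x + a n * p (n + 1) x = x * p n x)
    (w : ℕ → ℝ → ℝ)
    (hw0 : ∀ x, w 0 x = 1) (hw1 : ∀ x, w 1 x = (x - β 0) / α 0)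
    (hwrec : ∀ n : ℕ, 1 ≤ n → ∀ x,
      α ((n : ℤ) - 1) * w (n - 1) x + β (n : ℤ) * w n x + α (n : ℤ) * w (n + 1) x = x * w n x) :
    γ ^ 2 = 1 ∧ ∀ k : ℕ, ∀ i < N, p (N * k + i) 0 = γ ^ k * w i 0 := by
  have hN0 : 0 < N := by omega
  have hα0 : ∀ j, α j ≠ 0 := fun j => (hαpos j).ne'
  set B : ℤ → Matrix (Fin 2) (Fin 2) ℝ := fun j => transferMatrix α β j 0 with hBdef
  have hdet : ∀ j, (B j).det = α (j-1) / α j := by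
    intro j; simp [hBdef, transferMatrix, Matrix.det_fin_two_of]
  have eα1 : α ((N:ℤ) - 1) = α (-1) := by
    rw [show ((N:ℤ)-1) = -1 + N by ring]; exact hαper (-1)
  have eα : α (N:ℤ) = α 0 := by rw [show ((N:ℤ)) = 0 + N by ring]; exact hαper 0
  have eβ : β (N:ℤ) = β 0 := by rw [show ((N:ℤ)) = 0 + N by ring]; exact hβper 0
  -- Part 1 : γ ^ 2 = 1
  have hdetProd : ∀ len : ℕ, 1 ≤ len → (prodDesc B 0 len).det = α (-1) / α ((len:ℤ) - 1) := by
    intro len hlen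
    induction len with
    | zero => omega
    | succ m ih =>
      rcases Nat.eq_zero_or_pos m with hm | hm
      · subst hm
        have h1 : prodDesc B 0 1 = B 0 := by
          rw [show prodDesc B 0 1 = B (0+(0:ℕ)) * prodDesc B 0 0 from rfl]
          simp [prodDesc]
        rw [h1, hdet]; norm_num
      · rw [show prodDesc B 0 (m+1) = B (0+(m:ℕ)) * prodDesc B 0 m from rfl,
          Matrix.det_mul, ih hm]
        have e : (B ((0:ℤ)+(m:ℕ))).det = α ((m:ℤ)-1)/α m := by rw [hdet]; norm_num
        rw [e, show ((m+1:ℕ):ℤ)-1 = (m:ℤ) by push_cast; ring]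
        field_simp [hα0 ((m:ℤ)-1), hα0 (m:ℤ), hα0 (-1+(m:ℤ))]
  have part1 : γ ^ 2 = 1 := by
    have h := congrArg Matrix.det hF
    rw [hdetProd N (by omega), eα1, div_self (hα0 _)] at h
    simpa [Matrix.det_smul] using h.symm
  -- Part 2 : facts about w at 0
  have hvec : ∀ len : ℕ, prodDesc B 1 len *ᵥ ![w 0 0, w 1 0] = ![w len 0, w (len+1) 0] := by
    intro len
    induction len with
    | zero => simp [prodDesc]
    | succ m ih =>
      rw [show prodDesc B 1 (m+1) = B (1+(m:ℕ)) * prodDesc B 1 m from rfl,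
        ← Matrix.mulVec_mulVec, ih]
      have R := hwrec (m+1) (by omega) 0
      simp only [Nat.add_sub_cancel, zero_mul] at R
      push_cast at R
      rw [show (m:ℤ) + 1 - 1 = (m:ℤ) by ring] at R
      rw [show B (1+(m:ℕ)) = transferMatrix α β ((m:ℤ)+1) 0 by
            simp only [hBdef]; norm_num [add_comm], tmStep]
      funext j; fin_cases j
      · simp
      · simp only [Fin.mk_one, Fin.isValue, Matrix.cons_val_one, Matrix.head_cons, Matrix.cons_val_zero]
        rw [show (m:ℤ) + 1 - 1 = (m:ℤ) by ring]
        have hc := hα0 ((m:ℤ)+1)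
        field_simp
        linear_combination (-1 : ℝ) * R
  have hBN : B (N:ℤ) = B 0 := by
    simp only [hBdef, transferMatrix]
    rw [eα1, eα, eβ]
    norm_num
  have hprod1N : prodDesc B 1 N * B 0 = γ • B 0 := by
    have h2 := prodDesc_succ_left B 0 N
    rw [zero_add] at h2
    rw [← h2, show prodDesc B 0 (N+1) = B ((0:ℤ)+(N:ℕ)) * prodDesc B 0 N from rfl,
      zero_add, hBN, hF, Matrix.mul_smul, Matrix.mul_one]
  have hu : B 0 *ᵥ ![0,1] = ![w 0 0, w 1 0] := by
    rw [show B 0 = transferMatrix α β 0 0 from rfl, tmStep]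
    funext j; fin_cases j <;> simp [hw0, hw1]
  have key : ![w N 0, w (N+1) 0] = γ • ![w 0 0, w 1 0] := by
    rw [← hvec N, ← hu, Matrix.mulVec_mulVec, hprod1N, Matrix.smul_mulVec, hu]
  have hwN : w N 0 = γ := by
    have h := congrFun key 0
    simpa [hw0] using h
  have hwN1 : w (N+1) 0 = γ * w 1 0 := by
    have h := congrFun key 1
    simpa using h
  have hwm : w (N-1) 0 = 0 := by
    have R := hwrec N (by omega) 0
    rw [eα, eβ, hwN, hwN1, hw1, zero_mul] at R
    have e : α 0 * (γ * ((0 - β 0)/α 0)) = -(β 0 * γ) := by field_simp [hα0 0]; ring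
    have h0 : α ((N:ℤ)-1) * w (N-1) 0 = 0 := by linarith
    rcases mul_eq_zero.mp h0 with h | h
    · exact absurd h (by rw [eα1]; exact hα0 (-1))
    · exact h
  -- div/mod helpers
  have dmd : ∀ k i, i < N → (N*k+i)/N = k := by
    intro k i hi; rw [Nat.mul_add_div hN0, Nat.div_eq_of_lt hi, add_zero]
  have dmm : ∀ k i, i < N → (N*k+i)%N = i := by
    intro k i hi; rw [Nat.mul_add_mod, Nat.mod_eq_of_lt hi]
  -- Part 3 : main induction
  have main : ∀ n : ℕ, p n 0 = γ ^ (n / N) * w (n % N) 0 ∧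
      p (n+1) 0 = γ ^ ((n+1) / N) * w ((n+1) % N) 0 := by
    intro n
    induction n with
    | zero =>
      constructor
      · simp [hp0, hw0]
      · have d : 1 / N = 0 := Nat.div_eq_of_lt (by omega)
        have m1 : 1 % N = 1 := Nat.mod_eq_of_lt (by omega)
        have ha0 := ha 0 0 (by omega)
        have hb0 := hb 0 0 (by omega)
        norm_num at ha0 hb0
        rw [d, m1, hp1, hw1, pow_zero, one_mul, ha0, hb0]
        have h1 := (hatil 0).ne'
        have h2 := hα0 0
        field_simp
        ring
    | succ m ih =>
      refine ⟨ih.2, ?_⟩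
      obtain ⟨k, i, hik, hiN⟩ : ∃ k i, m + 1 = N * k + i ∧ i < N :=
        ⟨(m+1)/N, (m+1)%N, (Nat.div_add_mod (m+1) N).symm, Nat.mod_lt _ hN0⟩
      have E := hprec (m+1) (by omega) 0
      simp only [Nat.add_sub_cancel, zero_mul] at E
      rcases i with _ | i'
      · -- block boundary : m + 1 = N * k
        rcases k with _ | k'
        · omega
        · have h' : m + 1 = N*k' + N := by rw [hik]; ring
          have hm : m = N*k' + (N-1) := by omega
          have hm2 : m+2 = N*(k'+1)+1 := by omega
          have d1 : m / N = k' := by rw [hm]; exact dmd k' (N-1) (by omega)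
          have m1 : m % N = N-1 := by rw [hm]; exact dmm k' (N-1) (by omega)
          have d2 : (m+1)/N = k'+1 := by rw [hik]; exact dmd (k'+1) 0 hN0
          have m2 : (m+1)%N = 0 := by rw [hik]; exact dmm (k'+1) 0 hN0
          have d3 : (m+2)/N = k'+1 := by rw [hm2]; exact dmd _ 1 (by omega)
          have m3 : (m+2)%N = 1 := by rw [hm2]; exact dmm _ 1 (by omega)
          have ham : a m = α ↑(N-1) * atil k' := by rw [hm]; exact ha k' (N-1) (by omega)
          have hbm1 : b (m+1) = β 0 * atil (k'+1) := by
            rw [hik]; simpa using hb (k'+1) 0 hN0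
          have ham1 : a (m+1) = α 0 * atil (k'+1) := by
            rw [hik]; simpa using ha (k'+1) 0 hN0
          have hpm : p m 0 = 0 := by rw [ih.1, d1, m1, hwm, mul_zero]
          have hpm1 : p (m+1) 0 = γ^(k'+1) := by rw [ih.2, d2, m2, hw0, mul_one]
          rw [d3, m3, hw1]
          have hc : α 0 * atil (k'+1) ≠ 0 := mul_ne_zero (hα0 0) (hatil (k'+1)).ne'
          refine mul_left_cancel₀ hc ?_
          rw [ham, hbm1, ham1, hpm, hpm1] at E
          have e0 : α 0 * ((0 - β 0)/α 0) = -(β 0) := by field_simp [hα0 0]; ring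
          linear_combination E - atil (k'+1) * γ^(k'+1) * e0
      · -- interior of a block : m + 1 = N * k + (i' + 1)
        have hm : m = N*k + i' := by omega
        have d1 : m / N = k := by rw [hm]; exact dmd k i' (by omega)
        have m1 : m % N = i' := by rw [hm]; exact dmm k i' (by omega)
        have d2 : (m+1)/N = k := by rw [hik]; exact dmd k (i'+1) hiN
        have m2 : (m+1)%N = i'+1 := by rw [hik]; exact dmm k (i'+1) hiN
        have ham : a m = α ↑i' * atil k := by rw [hm]; exact ha k i' (by omega)
        have hbm1 : b (m+1) = β ↑(i'+1) * atil k := by rw [hik]; exact hb k (i'+1) hiN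
        have ham1 : a (m+1) = α ↑(i'+1) * atil k := by rw [hik]; exact ha k (i'+1) hiN
        have R := hwrec (i'+1) (by omega) 0
        rw [show ((i'+1:ℕ):ℤ)-1 = (i':ℤ) by push_cast; ring] at R
        simp only [Nat.add_sub_cancel, zero_mul] at R
        rw [ham, hbm1, ham1, ih.1, ih.2, d1, m1, d2, m2] at E
        have hc : α ↑(i'+1) * atil k ≠ 0 := mul_ne_zero (hα0 _) (hatil k).ne'
        rcases Nat.lt_or_ge (i'+2) N with hlt | hge
        · have hm2 : m+2 = N*k + (i'+2) := by omega
          have d3 : (m+2)/N = k := by rw [hm2]; exact dmd k (i'+2) hlt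
          have m3 : (m+2)%N = i'+2 := by rw [hm2]; exact dmm k (i'+2) hlt
          rw [d3, m3]
          refine mul_left_cancel₀ hc ?_
          linear_combination E - atil k * γ^k * R
        · have hiN2 : i'+2 = N := by omega
          have hm2 : m+2 = N*(k+1)+0 := by
            rw [Nat.mul_add, Nat.mul_one]; omega
          have d3 : (m+2)/N = k+1 := by rw [hm2]; exact dmd _ 0 hN0
          have m3 : (m+2)%N = 0 := by rw [hm2]; exact dmm _ 0 hN0
          rw [d3, m3, hw0, mul_one]
          have hwi2 : w (i'+1+1) 0 = γ := by rw [show i'+1+1 = N by omega, hwN]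
          refine mul_left_cancel₀ hc ?_
          linear_combination E - atil k * γ^k * R + atil k * γ^k * (α ↑(i'+1)) * hwi2
  refine ⟨part1, fun k i hi => ?_⟩
  have h := (main (N*k+i)).1
  rwa [dmd k i hi, dmm k i hi] at h
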